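/- For every M > 0 and every ε ∈ (0, 1/2) there exist μ > 0 and C > 0 such that the following holds. Let c₃, γ ∈ ℝ with |c₃| + |γ| ≤ μ, and let U solve the profile ODE with parameters (c₃, γ) and satisfy sup_{y ∈ (−1,1)} |U(y)| ≤ M(|c₃| + |γ|) and sup_{y ∈ (−1,1)} |U(y)| < 4ε. Then for all y ∈ (−1, 0], |U(y)| ≤ C (|c₃| + |γ|) (1+y)^{1−2ε}. -/

import Mathlib

open Set

/-- `U` solves the profile ODE with parameters `(c₃, γ)`:
`U` is continuous on `[-1,1]`, `C²` on `(-1,1)`, satisfies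
`(1-y²)U' + 2yU + U²/2 = c₃(1-y²)` on `(-1,1)`, and `U(0) = γ`. -/
def SolvesProfileODE (c₃ γ : ℝ) (U : ℝ → ℝ) : Prop :=
  ContinuousOn U (Icc (-1) 1) ∧
  ContDiffOn ℝ 2 U (Ioo (-1) 1) ∧
  (∀ y ∈ Ioo (-1 : ℝ) 1,
    (1 - y ^ 2) * deriv U y + 2 * y * U y + (1 / 2) * (U y) ^ 2 = c₃ * (1 - y ^ 2)) ∧
  U 0 = γ

/-- If `F b ≤ 0` and `F' ≥ 0` wherever `F > 0`, then `F ≤ 0` on `[a,b]`. -/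
lemma no_escape (a b : ℝ) (F F' : ℝ → ℝ)
    (hc : ContinuousOn F (Icc a b))
    (hd : ∀ x ∈ Ioo a b, HasDerivAt F (F' x) x)
    (hpos : ∀ x ∈ Ioo a b, 0 < F x → 0 ≤ F' x)
    (hb : F b ≤ 0) : ∀ x ∈ Icc a b, F x ≤ 0 := by
  intro x₀ hx₀
  by_contra hF
  push_neg at hF
  have hx₀b : x₀ < b := by
    rcases lt_or_eq_of_le hx₀.2 with h | h
    · exact h
    · exact absurd (h ▸ hb) (not_le.mpr hF)
  set S : Set ℝ := Icc x₀ b ∩ F ⁻¹' (Iic 0) with hS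
  have hSclosed : IsClosed S :=
    (hc.mono (Icc_subset_Icc hx₀.1 le_rfl)).preimage_isClosed_of_isClosed
      isClosed_Icc isClosed_Iic
  have hSne : S.Nonempty := ⟨b, ⟨hx₀.2, le_rfl⟩, hb⟩
  have hSbdd : BddBelow S := (bddBelow_Icc : BddBelow (Icc x₀ b)).mono inter_subset_left
  set y₂ := sInf S with hy₂
  have hy₂S : y₂ ∈ S := hSclosed.csInf_mem hSne hSbdd
  have hy₂F : F y₂ ≤ 0 := hy₂S.2
  have hx₀y₂ : x₀ < y₂ := by
    rcases lt_or_eq_of_le hy₂S.1.1 with h | h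
    · exact h
    · exact absurd (h ▸ hF) (not_lt.mpr hy₂F)
  obtain ⟨ξ, hξ, hslope⟩ := exists_hasDerivAt_eq_slope F F' hx₀y₂
    (hc.mono (Icc_subset_Icc hx₀.1 hy₂S.1.2))
    (fun x hx => hd x ⟨lt_of_le_of_lt hx₀.1 hx.1, lt_of_lt_of_le hx.2 hy₂S.1.2⟩)
  have hξab : ξ ∈ Ioo a b :=
    ⟨lt_of_le_of_lt hx₀.1 hξ.1, lt_of_lt_of_le hξ.2 hy₂S.1.2⟩
  have hFξ : 0 < F ξ := by
    by_contra h
    push_neg at h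
    have : ξ ∈ S := ⟨⟨hξ.1.le, le_trans hξ.2.le hy₂S.1.2⟩, h⟩
    exact absurd (csInf_le hSbdd this) (not_le.mpr hξ.2)
  have h1 : 0 ≤ F' ξ := hpos ξ hξab hFξ
  have h2 : F' ξ < 0 := by
    rw [hslope]
    apply div_neg_of_neg_of_pos <;> linarith
  linarith

lemma key_ineq (M ε s K v e y : ℝ)
    (hε0 : 0 < ε) (hε12 : ε < 1/2) (hM : 0 < M) (hs : 0 < s)
    (hK0 : 0 < K) (hKε : M + 1 ≤ K * ε)
    (hy1 : -1 < y) (hy0 : y < 0)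
    (hvM : v ≤ M * s) (hv4 : v ≤ 4 * ε)
    (hψv : K * s * ((1+y) ^ (1 - 2*ε) - (1+y)/2) < v)
    (hODE : -s * (1 - y^2) - 2*y*v - v^2/2 ≤ (1 - y^2) * e) :
    K * s * ((1 - 2*ε) * (1+y) ^ ((1 - 2*ε) - 1) - 1/2) ≤ e := by
  have h1y : (0:ℝ) < 1 + y := by linarith
  have h1y1 : 1 + y ≤ 1 := by linarith
  have hyy : (0:ℝ) < 1 - y^2 := by nlinarith
  set P := (1+y) ^ ((1 - 2*ε) - 1) with hPdef
  have hP0 : 0 < P := Real.rpow_pos_of_pos h1y _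
  have hP1 : 1 ≤ P :=
    Real.one_le_rpow_of_pos_of_le_one_of_nonpos h1y h1y1 (by linarith)
  have hsplit : (1+y) ^ (1 - 2*ε) = (1+y) * P := by
    rw [hPdef]
    nth_rewrite 2 [← Real.rpow_one (1+y)]
    rw [← Real.rpow_add h1y]; ring_nf
  rw [hsplit] at hψv
  have hv0 : 0 < v := by
    have h' : (1+y)/2 ≤ (1+y) * P := by nlinarith
    nlinarith [mul_nonneg (mul_nonneg hK0.le hs.le) (by linarith : (0:ℝ) ≤ (1+y) * P - (1+y)/2)]
  rw [← mul_le_mul_iff_right₀ hyy]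
  have h2 : 0 ≤ (1+y) * (M*s - v) := mul_nonneg h1y.le (by linarith)
  have h3 : 0 ≤ v * (4*ε*(1-y) - v) := by
    apply mul_nonneg hv0.le
    nlinarith [mul_nonneg hε0.le (by linarith : (0:ℝ) ≤ -y)]
  have h4 : 0 ≤ (1 - 2*ε) * (1-y) * (v - K * s * ((1+y) * P - (1+y)/2)) := by
    apply mul_nonneg (mul_nonneg (by linarith) (by linarith)) (by linarith)
  have h6 : 0 ≤ s * (1+y) * (1-y) * (K*ε - M - 1) :=
    mul_nonneg (mul_nonneg (mul_nonneg hs.le h1y.le) (by linarith)) (by linarith)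
  have h7 : 0 ≤ s * (1+y) * M * (-y) :=
    mul_nonneg (mul_nonneg (mul_nonneg hs.le h1y.le) hM.le) (by linarith)
  nlinarith [hODE, h2, h3, h4, h6, h7]

set_option maxHeartbeats 1000000 in
/-- Decay estimate `|U(y)| ≤ C(|c₃|+|γ|)(1+y)^{1-2ε}` near `y = -1` (estimate (2.10)). -/
theorem stmt8 (M : ℝ) (hM : 0 < M) (ε : ℝ) (hε : ε ∈ Ioo (0 : ℝ) (1 / 2)) :
    ∃ μ > 0, ∃ C > 0, ∀ c₃ γ : ℝ, |c₃| + |γ| ≤ μ →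
      ∀ U : ℝ → ℝ, SolvesProfileODE c₃ γ U →
        (∀ y ∈ Ioo (-1 : ℝ) 1, |U y| ≤ M * (|c₃| + |γ|)) →
        (∀ y ∈ Ioo (-1 : ℝ) 1, |U y| < 4 * ε) →
        ∀ y ∈ Ioc (-1 : ℝ) 0,
          |U y| ≤ C * (|c₃| + |γ|) * (1 + y) ^ (1 - 2 * ε) := by
  obtain ⟨hε0, hε12⟩ := hε
  obtain ⟨K, hKdef⟩ : ∃ K : ℝ, K = (M+1)/ε + 1 := ⟨_, rfl⟩
  have hK0 : 0 < K := by rw [hKdef]; positivity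
  have hKε : M + 1 ≤ K * ε := by
    rw [hKdef, add_mul, div_mul_cancel₀ _ hε0.ne']
    linarith
  have hK2 : 2 ≤ K := by
    have h2 : (M+1)*2 ≤ (M+1)/ε := by
      rw [le_div_iff₀ hε0]; nlinarith
    rw [hKdef]; nlinarith
  refine ⟨1, one_pos, K, hK0, ?_⟩
  intro c₃ γ hμ U hU hMbd hεbd y hy
  obtain ⟨s, hsdef⟩ : ∃ s : ℝ, s = |c₃| + |γ| := ⟨_, rfl⟩
  rw [← hsdef] at hMbd ⊢
  have hs0 : 0 ≤ s := by rw [hsdef]; positivity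
  have hyIoo : y ∈ Ioo (-1:ℝ) 1 := ⟨hy.1, lt_of_le_of_lt hy.2 one_pos⟩
  have h1y : (0:ℝ) < 1 + y := by linarith [hy.1]
  rcases eq_or_lt_of_le hs0 with hs | hs
  · -- s = 0
    have h0 : |U y| ≤ M * s := hMbd y hyIoo
    have hrpow : (0:ℝ) ≤ (1+y) ^ (1 - 2*ε) := Real.rpow_nonneg h1y.le _
    rw [← hs] at h0 ⊢
    simp only [mul_zero, zero_mul] at h0 ⊢
    linarith
  -- s > 0
  obtain ⟨hUc, hUcd, hUode, hU0⟩ := hU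
  have hγs : |γ| ≤ s := by rw [hsdef]; linarith [abs_nonneg c₃]
  have hc₃s : |c₃| ≤ s := by rw [hsdef]; linarith [abs_nonneg γ]
  have hone : ((1:ℝ)+0) ^ (1 - 2*ε) = 1 := by norm_num [Real.one_rpow]
  have hψ0 : K * s * ((1+(0:ℝ)) ^ (1 - 2*ε) - (1+0)/2) = K * s / 2 := by
    rw [hone]; ring
  have hψcont : Continuous (fun t : ℝ => K * s * ((1+t) ^ (1 - 2*ε) - (1+t)/2)) := by
    apply continuous_const.mul
    exact ((Real.continuous_rpow_const (by linarith)).comp (by continuity)).sub (by continuity)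
  have hψd : ∀ t ∈ Ioo (-1:ℝ) 0,
      HasDerivAt (fun z : ℝ => K * s * ((1+z) ^ (1 - 2*ε) - (1+z)/2))
        (K * s * ((1 - 2*ε) * (1+t) ^ ((1 - 2*ε) - 1) - 1/2)) t := by
    intro t ht
    have h1t : (0:ℝ) < 1 + t := by linarith [ht.1]
    have h1 : HasDerivAt (fun z : ℝ => 1 + z) 1 t := (hasDerivAt_id t).const_add 1
    have h2 : HasDerivAt (fun z : ℝ => (1+z) ^ (1 - 2*ε)) ((1 - 2*ε) * (1+t) ^ ((1 - 2*ε) - 1)) t := by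
      have := h1.rpow_const (p := 1 - 2*ε) (Or.inl h1t.ne')
      simpa using this
    have h3 : HasDerivAt (fun z : ℝ => (1+z)/2) (1/2) t := by
      simpa using h1.div_const 2
    exact (h2.sub h3).const_mul (K * s)
  have hUderiv : ∀ t ∈ Ioo (-1:ℝ) 1, HasDerivAt U (deriv U t) t := fun t ht =>
    ((hUcd.differentiableOn (by norm_num)).differentiableAt (Ioo_mem_nhds ht.1 ht.2)).hasDerivAt
  -- comparison result for W = σ • U, σ = ±1
  have main : ∀ σ : ℝ, σ = 1 ∨ σ = -1 → ∀ t ∈ Ioc (-1:ℝ) 0,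
      σ * U t ≤ K * s * ((1+t) ^ (1 - 2*ε) - (1+t)/2) := by
    intro σ hσ t ht
    have hσabs : |σ| = 1 := by rcases hσ with h | h <;> simp [h]
    have hσ1 : σ ≤ 1 := by rcases hσ with h | h <;> simp [h]
    have hσsq : σ^2 = 1 := by rcases hσ with h | h <;> simp [h]
    -- value at 0
    have hF0 : σ * U 0 - K * s * ((1+(0:ℝ)) ^ (1 - 2*ε) - (1+0)/2) ≤ 0 := by
      have h1 : σ * U 0 ≤ |γ| := by
        calc σ * U 0 ≤ |σ * U 0| := le_abs_self _
        _ = |U 0| := by rw [abs_mul, hσabs, one_mul]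
        _ = |γ| := by rw [hU0]
      rw [hψ0]
      nlinarith [hγs, mul_nonneg (by linarith : (0:ℝ) ≤ K - 2) hs.le]
    -- key inequality wherever σU > ψ
    have hkey : ∀ x ∈ Ioo (-1:ℝ) 0, 0 < σ * U x - K * s * ((1+x) ^ (1 - 2*ε) - (1+x)/2) →
        0 ≤ σ * deriv U x - K * s * ((1 - 2*ε) * (1+x) ^ ((1 - 2*ε) - 1) - 1/2) := by
      intro x hx hpos
      have hxIoo : x ∈ Ioo (-1:ℝ) 1 := ⟨hx.1, lt_trans hx.2 one_pos⟩
      have hode := hUode x hxIoo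
      have hxx : (0:ℝ) < 1 - x^2 := by nlinarith [hx.1, hx.2]
      have habs := hMbd x hxIoo
      have habs4 := hεbd x hxIoo
      have hUabs : σ * U x ≤ |U x| := by
        calc σ * U x ≤ |σ * U x| := le_abs_self _
        _ = |U x| := by rw [abs_mul, hσabs, one_mul]
      have hvM : σ * U x ≤ M * s := le_trans hUabs habs
      have hv4 : σ * U x ≤ 4 * ε := le_trans hUabs habs4.le
      have heq : (1 - x^2) * (σ * deriv U x) =
          σ * c₃ * (1 - x^2) - 2*x*(σ * U x) - σ * (U x)^2/2 := by
        linear_combination σ * hode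
      have hq : (σ * U x)^2 = (U x)^2 := by rw [mul_pow, hσsq, one_mul]
      have hbc : -s ≤ σ * c₃ := by
        have h := neg_abs_le (σ * c₃)
        rw [abs_mul, hσabs, one_mul] at h
        linarith [hc₃s]
      have hbound : -s * (1 - x^2) ≤ σ * c₃ * (1 - x^2) :=
        mul_le_mul_of_nonneg_right hbc hxx.le
      have hODE : -s * (1 - x^2) - 2*x*(σ * U x) - (σ * U x)^2/2 ≤ (1 - x^2) * (σ * deriv U x) := by
        rw [hq]
        nlinarith [heq, hbound, mul_nonneg (by linarith : (0:ℝ) ≤ 1 - σ) (sq_nonneg (U x))]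
      have := key_ineq M ε s K (σ * U x) (σ * deriv U x) x hε0 hε12 hM hs hK0 hKε
        hx.1 hx.2 hvM hv4 (by linarith) hODE
      linarith
    rcases eq_or_lt_of_le ht.2 with h0 | hlt
    · subst h0; linarith [hF0]
    · have hsub : Icc t 0 ⊆ Icc (-1:ℝ) 1 := Icc_subset_Icc ht.1.le (by norm_num)
      have hcont : ContinuousOn
          (fun z => σ * U z - K * s * ((1+z) ^ (1 - 2*ε) - (1+z)/2)) (Icc t 0) :=
        (continuousOn_const.mul (hUc.mono hsub)).sub hψcont.continuousOn
      have hderiv : ∀ x ∈ Ioo t 0,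
          HasDerivAt (fun z => σ * U z - K * s * ((1+z) ^ (1 - 2*ε) - (1+z)/2))
          (σ * deriv U x - K * s * ((1 - 2*ε) * (1+x) ^ ((1 - 2*ε) - 1) - 1/2)) x := by
        intro x hx
        have hxI : x ∈ Ioo (-1:ℝ) 0 := ⟨lt_of_le_of_lt ht.1.le hx.1, hx.2⟩
        exact ((hUderiv x ⟨hxI.1, lt_trans hxI.2 one_pos⟩).const_mul σ).sub (hψd x hxI)
      have hres := no_escape t 0
        (fun z => σ * U z - K * s * ((1+z) ^ (1 - 2*ε) - (1+z)/2))
        (fun x => σ * deriv U x - K * s * ((1 - 2*ε) * (1+x) ^ ((1 - 2*ε) - 1) - 1/2))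
        hcont hderiv
        (fun x hx hp => hkey x ⟨lt_of_le_of_lt ht.1.le hx.1, hx.2⟩ hp)
        hF0 t ⟨le_rfl, ht.2⟩
      have hres' : σ * U t - K * s * ((1+t) ^ (1 - 2*ε) - (1+t)/2) ≤ 0 := hres
      linarith
  have h1 := main 1 (Or.inl rfl) y hy
  have h2 := main (-1) (Or.inr rfl) y hy
  have hψle : K * s * ((1+y) ^ (1 - 2*ε) - (1+y)/2) ≤ K * s * (1+y) ^ (1 - 2*ε) := by
    have h' : (0:ℝ) ≤ (1+y)/2 := by linarith
    nlinarith [mul_nonneg (mul_nonneg hK0.le hs.le) h']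
  rw [abs_le]
  constructor
  · nlinarith [h2, hψle]
  · nlinarith [h1, hψle]
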